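/- Let Ω ⊂ ℝⁿ be a bounded open set and let u₀ : closure(Ω) → ℝ be continuous with u₀ ≥ 0 and u₀ not identically zero. Then there exists a C^∞ function u̲₀ : Ω → ℝ such that: u̲₀ is not identically zero; 0 ≤ u̲₀(x) ≤ min{u₀(x), 1} for all x ∈ Ω; the support of u̲₀ is a compact subset of Ω; and 2 Δ u̲₀(x) ≤ 1 for all x ∈ Ω. -/

import Mathlib

open Set Filter

/-- The Laplacian of `f : ℝⁿ → ℝ` at `x`: the sum of the second partial
derivatives in the coordinate directions. -/
noncomputable def laplacian {n : ℕ} (f : EuclideanSpace ℝ (Fin n) → ℝ)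
    (x : EuclideanSpace ℝ (Fin n)) : ℝ :=
  ∑ i : Fin n, iteratedFDeriv ℝ 2 f x ![EuclideanSpace.single i 1, EuclideanSpace.single i 1]

lemma laplacian_zero_of_not_mem_tsupport {n : ℕ} {f : EuclideanSpace ℝ (Fin n) → ℝ}
    {x : EuclideanSpace ℝ (Fin n)} (hx : x ∉ tsupport f) : laplacian f x = 0 := by
  have h : iteratedFDeriv ℝ 2 f x = 0 := by
    by_contra h
    exact hx (tsupport_iteratedFDeriv_subset 2 (subset_closure (by simpa using h)))
  simp [laplacian, h]

lemma laplacian_smul {n : ℕ} {f : EuclideanSpace ℝ (Fin n) → ℝ} (hf : ContDiff ℝ 2 f)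
    (a : ℝ) (x : EuclideanSpace ℝ (Fin n)) :
    laplacian (fun y => a * f y) x = a * laplacian f x := by
  have : ∀ y, a * f y = (a • f) y := fun y => rfl
  simp only [laplacian, this]
  rw [Finset.mul_sum]
  congr 1
  ext i
  rw [iteratedFDeriv_const_smul_apply hf.contDiffAt]
  simp

lemma laplacian_continuous {n : ℕ} {f : EuclideanSpace ℝ (Fin n) → ℝ}
    (hf : ContDiff ℝ (⊤ : ℕ∞) f) : Continuous (laplacian f) := by
  apply continuous_finset_sum
  intro i _
  exact (continuous_eval_const _).comp
    (hf.continuous_iteratedFDeriv (m := 2) (WithTop.coe_le_coe.mpr le_top))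

/-- Lemma 2.1, case used for `m ≥ 3`: given `u₀` continuous and nonnegative on
`closure Ω`, not identically zero, there is a smooth function `u̲₀`, not identically zero,
with `0 ≤ u̲₀ ≤ min {u₀, 1}` on `Ω`, compactly supported in `Ω`, satisfying
`2 Δ u̲₀ ≤ 1` on `Ω`. -/
theorem initial_subsolution_exists' (n : ℕ) (Ω : Set (EuclideanSpace ℝ (Fin n)))
    (hΩo : IsOpen Ω) (hΩb : Bornology.IsBounded Ω)
    (u₀ : EuclideanSpace ℝ (Fin n) → ℝ)
    (hu₀c : ContinuousOn u₀ (closure Ω))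
    (hu₀nonneg : ∀ x ∈ closure Ω, 0 ≤ u₀ x)
    (hu₀ne : ∃ x ∈ closure Ω, u₀ x ≠ 0) :
    ∃ f : EuclideanSpace ℝ (Fin n) → ℝ,
      ContDiff ℝ (⊤ : ℕ∞) f ∧
      (∃ x ∈ Ω, f x ≠ 0) ∧
      (∀ x ∈ Ω, 0 ≤ f x ∧ f x ≤ min (u₀ x) 1) ∧
      IsCompact (tsupport f) ∧ tsupport f ⊆ Ω ∧
      (∀ x ∈ Ω, 2 * laplacian f x ≤ 1) := by
  obtain ⟨x', hx', hne⟩ := hu₀ne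
  have hpos : 0 < u₀ x' := lt_of_le_of_ne (hu₀nonneg x' hx') (Ne.symm hne)
  set c : ℝ := u₀ x' / 2 with hc
  have hcpos : 0 < c := by positivity
  -- find an open set where u₀ > c on closure Ω
  have hev : ∀ᶠ y in nhdsWithin x' (closure Ω), c < u₀ y :=
    (hu₀c x' hx').eventually (eventually_gt_nhds (half_lt_self hpos))
  rw [eventually_iff, mem_nhdsWithin] at hev
  obtain ⟨U, hUo, hxU, hU⟩ := hev
  -- find a point of Ω inside U
  obtain ⟨x₀, hx₀U, hx₀Ω⟩ := (mem_closure_iff.mp hx') U hUo hxU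
  obtain ⟨r, hrpos, hball⟩ := Metric.isOpen_iff.mp (hUo.inter hΩo) x₀ ⟨hx₀U, hx₀Ω⟩
  set δ : ℝ := r / 2 with hδ
  have hδpos : 0 < δ := by positivity
  have hcb : Metric.closedBall x₀ δ ⊆ U ∩ Ω := by
    refine subset_trans ?_ hball
    intro y hy
    have : dist y x₀ ≤ δ := Metric.mem_closedBall.mp hy
    exact Metric.mem_ball.mpr (lt_of_le_of_lt this (by simp [hδ]; linarith))
  -- the bump function
  let φ : ContDiffBump x₀ := ⟨δ/2, δ, by positivity, by linarith⟩
  have hφsm : ContDiff ℝ (⊤ : ℕ∞) φ := φ.contDiff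
  -- bound on laplacian of φ
  obtain ⟨M₀, hM₀⟩ := (isCompact_closedBall x₀ δ).exists_bound_of_continuousOn
    ((laplacian_continuous hφsm).continuousOn)
  set M : ℝ := max M₀ 0 with hM
  have hMnonneg : 0 ≤ M := le_max_right _ _
  have hlapbound : ∀ x, laplacian (⇑φ) x ≤ M := by
    intro x
    by_cases hx : x ∈ tsupport (⇑φ)
    · rw [φ.tsupport_eq] at hx
      calc laplacian (⇑φ) x ≤ ‖laplacian (⇑φ) x‖ := le_abs_self _
        _ ≤ M₀ := hM₀ x hx
        _ ≤ M := le_max_left _ _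
    · rw [laplacian_zero_of_not_mem_tsupport hx]; exact hMnonneg
  set ε : ℝ := min c (min 1 (1 / (2 * (M + 1)))) with hε
  have hεpos : 0 < ε := by
    refine lt_min hcpos (lt_min one_pos ?_)
    positivity
  have hεc : ε ≤ c := min_le_left _ _
  have hε1 : ε ≤ 1 := (min_le_right _ _).trans (min_le_left _ _)
  have hεM : ε ≤ 1 / (2 * (M + 1)) := (min_le_right _ _).trans (min_le_right _ _)
  refine ⟨fun x => ε * φ x, ?_, ?_, ?_, ?_, ?_, ?_⟩
  · exact hφsm.const_smul ε
  · refine ⟨x₀, hx₀Ω, ?_⟩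
    have h1 : φ x₀ = 1 := φ.one_of_mem_closedBall (by simp [Metric.mem_closedBall]; positivity)
    simp [h1]
    positivity
  · intro x hx
    constructor
    · exact mul_nonneg hεpos.le φ.nonneg
    · by_cases hxs : φ x = 0
      · show ε * φ x ≤ _
        rw [hxs, mul_zero]
        exact le_min (hu₀nonneg x (subset_closure hx)) one_pos.le
      · have hxsupp : x ∈ Metric.ball x₀ δ := by
          rw [← φ.support_eq]; exact hxs
        have hxU' : x ∈ U ∩ Ω := hball (by
          refine Metric.mem_ball.mpr (lt_of_lt_of_le (Metric.mem_ball.mp hxsupp) ?_)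
          simp [hδ]; linarith)
        have hu₀x : c < u₀ x := hU ⟨hxU'.1, subset_closure hxU'.2⟩
        have hle : ε * φ x ≤ ε := by
          nlinarith [φ.le_one (x := x), φ.nonneg (x := x)]
        exact le_min (hle.trans (hεc.trans hu₀x.le)) (hle.trans hε1)
  · have hts : tsupport (fun x => ε * φ x) ⊆ Metric.closedBall x₀ δ := by
      rw [← φ.tsupport_eq]
      exact closure_mono (Function.support_mul_subset_right _ _)
    exact IsCompact.of_isClosed_subset (isCompact_closedBall x₀ δ) (isClosed_tsupport _) hts
  · have hts : tsupport (fun x => ε * φ x) ⊆ Metric.closedBall x₀ δ := by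
      rw [← φ.tsupport_eq]
      exact closure_mono (Function.support_mul_subset_right _ _)
    exact hts.trans (hcb.trans inter_subset_right)
  · intro x hx
    rw [laplacian_smul (φ.contDiff.of_le (WithTop.coe_le_coe.mpr le_top)) ε x]
    have h1 : laplacian (⇑φ) x ≤ M := hlapbound x
    have h2 : 0 < 2 * (M + 1) := by positivity
    have h3 : ε * laplacian (⇑φ) x ≤ ε * M := mul_le_mul_of_nonneg_left h1 hεpos.le
    have h4 : ε * M ≤ M / (2 * (M + 1)) := by
      rw [div_eq_mul_inv, mul_comm M]
      exact mul_le_mul_of_nonneg_right (by rwa [one_div] at hεM) hMnonneg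
    have h5 : M / (2 * (M + 1)) ≤ 1 / 2 := by
      rw [div_le_iff₀ h2]
      linarith
    linarith
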